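/- Let α > 0 and β, γ ∈ ℝ. With Λ₀ := α, Λ₂ := α(1−√2+(2−√2)i), Λ₁μ := √(iα), Λ₁ω := i·(1 − √(2α)/(2√(iα))), and M := (3/4)γ + β²·(Λ₀⁻¹ + (2Λ₂)⁻¹), one has Im(M·conj(Λ₁ω)) / Im(Λ₁ω·conj(Λ₁μ)) = (1/√α)·( (β²/α)·(1/3 − 1/(2√2)) − (3/(4√2))·γ ). -/

import Mathlib

noncomputable def csqrt (z : ℂ) : ℂ := z ^ (1/2 : ℂ)

lemma csqrt_I_mul (α : ℝ) (hα : 0 ≤ α) :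
    csqrt (Complex.I * α) = (Real.sqrt (α/2) : ℂ) * (1 + Complex.I) := by
  have habs : ‖Complex.I * (α:ℂ)‖ = α := by
    simp [abs_of_nonneg hα]
  apply Complex.ext
  · rw [csqrt, show (1/2:ℂ) = 2⁻¹ by norm_num, Complex.cpow_inv_two_re, habs]
    simp
  · rw [csqrt, show (1/2:ℂ) = 2⁻¹ by norm_num, Complex.cpow_inv_two_im_eq_sqrt (by simp [hα]),
      habs]
    simp

theorem stmt_11 (α β γ : ℝ) (hα : 0 < α) :
    let Λ₀ : ℂ := (α : ℂ)
    let Λ₂ : ℂ := (α : ℂ) * (1 - Real.sqrt 2 + (2 - Real.sqrt 2) * Complex.I)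
    let Λ₁μ : ℂ := csqrt (Complex.I * α)
    let Λ₁ω : ℂ := Complex.I * (1 - (Real.sqrt (2*α) : ℂ) / (2 * csqrt (Complex.I * α)))
    let M : ℂ := (3/4 : ℂ) * γ + (β:ℂ)^2 * (Λ₀⁻¹ + (2*Λ₂)⁻¹)
    (M * (starRingEnd ℂ) Λ₁ω).im / (Λ₁ω * (starRingEnd ℂ) Λ₁μ).im
      = (1/Real.sqrt α) * ((β^2/α) * (1/3 - 1/(2*Real.sqrt 2)) - (3/(4*Real.sqrt 2)) * γ) := by
  intro Λ₀ Λ₂ Λ₁μ Λ₁ω M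
  set s : ℝ := Real.sqrt (α/2) with hs
  have hs0 : 0 < s := Real.sqrt_pos.mpr (by linarith)
  have hs2 : s^2 = α/2 := Real.sq_sqrt (by linarith)
  have h2a : Real.sqrt (2*α) = 2*s := by
    rw [hs, show 2*α = (2:ℝ)^2 * (α/2) by ring, Real.sqrt_mul (by positivity),
      Real.sqrt_sq (by norm_num)]
  have hcs : csqrt (Complex.I * α) = (s : ℂ) * (1 + Complex.I) :=
    csqrt_I_mul α hα.le
  have hΛ₁μ : Λ₁μ = (s : ℂ) * (1 + Complex.I) := hcs
  have hsC : (s : ℂ) ≠ 0 := by exact_mod_cast hs0.ne'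
  have h1I : (1 + Complex.I) ≠ 0 := by
    intro h; simpa using congrArg Complex.im h
  have hΛ₁ω : Λ₁ω = (-1 + Complex.I)/2 := by
    show Complex.I * (1 - (Real.sqrt (2*α) : ℂ) / (2 * csqrt (Complex.I * α))) = _
    rw [h2a, hcs]
    push_cast
    field_simp
    ring_nf
    simp [Complex.ext_iff]
    ring_nf
  set t : ℝ := Real.sqrt 2 with htdef
  have ht0 : 0 < t := Real.sqrt_pos.mpr (by norm_num)
  have ht2 : t^2 = 2 := Real.sq_sqrt (by norm_num)
  have ht32 : t < 3/2 := by nlinarith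
  have h96 : (0:ℝ) < 9 - 6*t := by linarith
  have haC : (α:ℂ) ≠ 0 := by exact_mod_cast hα.ne'
  have h96C : ((9:ℂ) - 6*t) ≠ 0 := by
    intro h
    have := congrArg Complex.re h
    push_cast at this
    simp at this
    linarith
  have hden : (Λ₁ω * (starRingEnd ℂ) Λ₁μ).im = s := by
    rw [hΛ₁ω, hΛ₁μ]
    simp [Complex.ext_iff, Complex.mul_im, Complex.mul_re, Complex.div_im, Complex.div_re]
    ring
  set a : ℝ := 3/4*γ + β^2*(α⁻¹ + (1-t)/(2*α*(9-6*t))) with hadef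
  set b : ℝ := -(β^2*((2-t)/(2*α*(9-6*t)))) with hbdef
  have ht2C : (t:ℂ)^2 = 2 := by exact_mod_cast ht2
  have h96R : (9 - 6*t : ℝ) ≠ 0 := h96.ne'
  have h96C : ((9:ℂ) - 6*(t:ℂ)) ≠ 0 := by
    intro h
    have := congrArg Complex.re h
    simp at this
    linarith
  have hΛ₂inv : (2*Λ₂)⁻¹ = ((1-(t:ℂ)) - (2-(t:ℂ))*Complex.I) / (2*α*(9-6*(t:ℂ))) := by
    have key : (((1-(t:ℂ)) - (2-(t:ℂ))*Complex.I) / (2*α*(9-6*(t:ℂ)))) * (2*Λ₂) = 1 := by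
      show (((1-(t:ℂ)) - (2-(t:ℂ))*Complex.I) / (2*(α:ℂ)*(9-6*(t:ℂ))))
        * (2 * ((α : ℂ) * (1 - (t:ℂ) + (2 - (t:ℂ)) * Complex.I))) = 1
      rw [div_mul_eq_mul_div, div_eq_one_iff_eq
        (mul_ne_zero (mul_ne_zero two_ne_zero haC) h96C)]
      linear_combination (4*(α:ℂ))*ht2C - 2*(α:ℂ)*(2-(t:ℂ))^2 * Complex.I_sq
    exact inv_eq_of_mul_eq_one_left key
  have hM : M = (a : ℂ) + (b : ℂ) * Complex.I := by
    show (3/4 : ℂ) * γ + (β:ℂ)^2 * (((α:ℂ))⁻¹ + (2*Λ₂)⁻¹) = _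
    rw [hΛ₂inv, hadef, hbdef]
    push_cast
    ring
  have hnum : (M * (starRingEnd ℂ) Λ₁ω).im = -(a+b)/2 := by
    rw [hM, hΛ₁ω]
    simp [Complex.ext_iff, Complex.mul_im, Complex.mul_re, Complex.div_im, Complex.div_re]
    ring
  rw [hnum, hden]
  have hsqα : Real.sqrt α = s * t := by
    rw [hs, htdef, ← Real.sqrt_mul (by positivity)]
    norm_num
  rw [hsqα, hadef, hbdef]
  have hα' : α = 2 * s^2 := by rw [hs2]; ring
  rw [hα']
  have h96' : (9 - t*6:ℝ) ≠ 0 := by linarith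
  field_simp
  linear_combination (γ*s^2*(216*t-324) + β^2*(144*t-108)) * ht2
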